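/- Let X₁, Y₁ be independent standard Gaussian and f_{s,t}(X₁,Y₁) = (e^{isX₁} − e^{−s²/2})(e^{itY₁} − e^{−t²/2}). Then for all l ∈ ℕ: E[Re f_{s,t}(X₁,Y₁)·H_l(X₁)] = 0 and E[Re f_{s,t}(X₁,Y₁)·H_l(Y₁)] = 0, i.e., all bivariate Hermite coefficients J_{l,0} and J_{0,l} of Re f_{s,t} vanish. Moreover E[Im f_{s,t}(X₁,Y₁)·X₁·Y₁] = 0. -/

import Mathlib

open MeasureTheory ProbabilityTheory

open Complex
open scoped ENNReal NNReal Real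

noncomputable def stdG : Measure ℝ := gaussianReal 0 1

lemma stdG_def : stdG = volume.withDensity (gaussianPDF 0 1) := by
  simp [stdG, gaussianReal]

lemma pdf01 (x : ℝ) : gaussianPDFReal 0 1 x = (Real.sqrt (2 * Real.pi))⁻¹ * Real.exp (-(1/2) * x ^ 2) := by
  simp only [gaussianPDFReal, NNReal.coe_one, mul_one, sub_zero]
  ring_nf

lemma integral_stdG (g : ℝ → ℂ) :
    ∫ x, g x ∂stdG = ∫ x, gaussianPDFReal 0 1 x • g x := by
  rw [stdG_def]
  have h : gaussianPDF 0 1 = fun x => ((Real.toNNReal (gaussianPDFReal 0 1 x) : ℝ≥0) : ℝ≥0∞) := rfl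
  rw [h, integral_withDensity_eq_integral_smul ((measurable_gaussianPDFReal 0 1).real_toNNReal)]
  congr 1; ext x
  rw [NNReal.smul_def, Real.coe_toNNReal _ (gaussianPDFReal_nonneg 0 1 x)]

lemma integrable_poly (q : Polynomial ℝ) :
    Integrable (fun x => (Polynomial.aeval x q : ℝ)) stdG := by
  have base : ∀ (a : ℝ) (n : ℕ), Integrable (fun x : ℝ => a * x ^ n) stdG := by
    intro a n
    rw [stdG_def, integrable_withDensity_iff (measurable_gaussianPDF 0 1)
      (Filter.Eventually.of_forall fun x => ENNReal.ofReal_lt_top)]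
    have h1 : Integrable (fun x : ℝ => x ^ n * Real.exp (-(1/2) * x ^ 2)) := by
      have := integrable_rpow_mul_exp_neg_mul_sq (b := 1/2) (by norm_num)
        (s := (n : ℝ)) (by exact_mod_cast neg_one_lt_zero.trans_le (Nat.cast_nonneg n))
      simpa [Real.rpow_natCast] using this
    have h2 := (h1.const_mul (a * (Real.sqrt (2 * Real.pi))⁻¹))
    refine h2.congr (Filter.Eventually.of_forall fun x => ?_)
    simp only []
    rw [show gaussianPDF 0 1 x = ENNReal.ofReal (gaussianPDFReal 0 1 x) from rfl,
      ENNReal.toReal_ofReal (gaussianPDFReal_nonneg 0 1 x), pdf01]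
    ring
  induction q using Polynomial.induction_on' with
  | add p q hp hq => exact (hp.add hq).congr (Filter.Eventually.of_forall fun x => by simp)
  | monomial n a =>
      exact (base a n).congr (Filter.Eventually.of_forall fun x => by simp [Polynomial.aeval_monomial])

lemma charG (u : ℝ) :
    ∫ x, Complex.exp ((u : ℂ) * (x : ℂ) * Complex.I) ∂stdG
      = (Real.exp (-(u ^ 2) / 2) : ℂ) := by
  rw [integral_stdG]
  have key := fourierIntegral_gaussian (b := (1/2 : ℂ)) (by norm_num) (u : ℂ)
  have step : ∫ x : ℝ, gaussianPDFReal 0 1 x • Complex.exp ((u : ℂ) * (x : ℂ) * Complex.I)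
      = ((Real.sqrt (2 * Real.pi))⁻¹ : ℂ)
        * ∫ x : ℝ, Complex.exp (Complex.I * (u : ℂ) * (x : ℂ))
            * Complex.exp (-(1/2 : ℂ) * (x : ℂ) ^ 2) := by
    rw [← integral_const_mul]
    congr 1; ext x
    rw [pdf01]
    push_cast [Complex.real_smul, Complex.ofReal_exp]
    ring_nf
  rw [step, key]
  have h2π : (0 : ℝ) ≤ 2 * Real.pi := by positivity
  have hcpow : ((Real.pi : ℂ) / (1/2 : ℂ)) ^ (1/2 : ℂ) = ((Real.sqrt (2 * Real.pi) : ℝ) : ℂ) := by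
    have : ((Real.pi : ℂ) / (1/2 : ℂ)) = ((2 * Real.pi : ℝ) : ℂ) := by push_cast; ring
    rw [this, show (1/2 : ℂ) = ((1/2 : ℝ) : ℂ) by norm_num, ← Complex.ofReal_cpow h2π,
      ← Real.sqrt_eq_rpow]
  rw [hcpow]
  have hsne : (Real.sqrt (2 * Real.pi) : ℂ) ≠ 0 := by
    simp [Real.sqrt_eq_zero', Real.pi_pos.le]
  rw [← mul_assoc, inv_mul_cancel₀ hsne, one_mul]
  rw [show (-(u:ℂ) ^ 2 / (4 * (1/2))) = (((-(u^2)/2 : ℝ)) : ℂ) by push_cast; ring,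
    ← Complex.ofReal_exp]

noncomputable def Afun (u : ℝ) (x : ℝ) : ℂ :=
  Complex.exp ((u : ℂ) * (x : ℂ) * Complex.I) - (Real.exp (-(u ^ 2) / 2) : ℂ)

instance : IsProbabilityMeasure stdG := inferInstanceAs (IsProbabilityMeasure (gaussianReal 0 1))

lemma Afun_cont (u : ℝ) : Continuous (Afun u) := by
  unfold Afun; fun_prop

lemma Afun_bdd (u : ℝ) (x : ℝ) : ‖Afun u x‖ ≤ 2 := by
  unfold Afun
  refine (norm_sub_le _ _).trans ?_
  have h1 : ‖Complex.exp ((u : ℂ) * (x : ℂ) * Complex.I)‖ = 1 := by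
    rw [Complex.norm_exp]
    simp [Complex.mul_re]
  have h2 : ‖((Real.exp (-(u ^ 2) / 2) : ℝ) : ℂ)‖ ≤ 1 := by
    rw [Complex.norm_real, Real.norm_eq_abs, abs_of_pos (Real.exp_pos _)]
    exact Real.exp_le_one_iff.mpr (by nlinarith [sq_nonneg u])
  linarith

lemma intA_poly (u : ℝ) (q : Polynomial ℝ) :
    Integrable (fun x => Afun u x * ((Polynomial.aeval x q : ℝ) : ℂ)) stdG :=
  Integrable.bdd_mul ((integrable_poly q).ofReal)
    (Afun_cont u).aestronglyMeasurable (ae_of_all _ (Afun_bdd u))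

lemma intA (u : ℝ) : Integrable (Afun u) stdG := by
  have := intA_poly u 1
  simpa using this

lemma integralA (u : ℝ) : ∫ x, Afun u x ∂stdG = 0 := by
  unfold Afun
  have hexp : Integrable (fun x : ℝ => Complex.exp ((u : ℂ) * (x : ℂ) * Complex.I)) stdG := by
    have h2 : Integrable (fun _ : ℝ => (Real.exp (-(u ^ 2) / 2) : ℂ)) stdG := integrable_const _
    refine ((intA u).add h2).congr (Filter.Eventually.of_forall fun x => ?_)
    simp [Afun]
  rw [integral_sub hexp (integrable_const _), charG, integral_const]
  simp

lemma stdG_neg : stdG.map (fun x => -x) = stdG := by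
  have h := gaussianReal_map_const_mul (μ := 0) (v := 1) (-1)
  have h1 : (NNReal.mk ((-1 : ℝ)^2) (sq_nonneg _)) * 1 = 1 := by
    ext; norm_num
  rw [h1] at h
  simpa [stdG, show (fun x : ℝ => -1 * x) = fun x : ℝ => -x by funext x; ring] using h

lemma odd_integral {h : ℝ → ℝ} (hc : Continuous h) (hodd : ∀ x, h (-x) = - h x) :
    ∫ x, h x ∂stdG = 0 := by
  have h1 : ∫ x, h x ∂stdG = ∫ x, h (-x) ∂stdG := by
    conv_lhs => rw [← stdG_neg]
    rw [integral_map measurable_neg.aemeasurable hc.aestronglyMeasurable]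
  have h2 : ∫ x, h (-x) ∂stdG = - ∫ x, h x ∂stdG := by
    simp only [hodd]
    exact integral_neg _
  linarith [h1, h2]

lemma reA_zero (u : ℝ) : (∫ x, Afun u x * (x : ℂ) ∂stdG).re = 0 := by
  have hi : Integrable (fun x => Afun u x * ((x : ℝ) : ℂ)) stdG := by
    have := intA_poly u Polynomial.X
    simpa using this
  rw [show (∫ x, Afun u x * (x : ℂ) ∂stdG).re
      = RCLike.re (∫ x, Afun u x * (x : ℂ) ∂stdG) from rfl, ← integral_re hi]
  have hh : ∀ x : ℝ, (Afun u x * (x : ℂ)).re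
      = (Real.cos (u * x) - Real.exp (-(u ^ 2) / 2)) * x := by
    intro x
    have : ((u : ℂ) * (x : ℂ) * Complex.I) = ((u * x : ℝ) : ℂ) * Complex.I := by push_cast; ring
    simp only [Afun, this, Complex.mul_re, Complex.sub_re, Complex.exp_ofReal_mul_I_re,
      Complex.ofReal_re, Complex.ofReal_im, Complex.sub_im, Complex.exp_ofReal_mul_I_im,
      mul_zero, sub_zero, zero_sub, zero_mul]
  simp only [RCLike.re_to_complex, hh]
  refine odd_integral (by fun_prop) fun x => ?_
  rw [show u * -x = -(u * x) by ring, Real.cos_neg]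
  ring

lemma prod_re_eq (F G : ℝ → ℂ) (hF : Integrable F stdG) (hG : Integrable G stdG) :
    ∫ p : ℝ × ℝ, (F p.1 * G p.2).re ∂(stdG.prod stdG)
      = ((∫ x, F x ∂stdG) * (∫ y, G y ∂stdG)).re := by
  rw [show (∫ p : ℝ × ℝ, (F p.1 * G p.2).re ∂(stdG.prod stdG))
      = ∫ p : ℝ × ℝ, RCLike.re (F p.1 * G p.2) ∂(stdG.prod stdG) from rfl,
    integral_re (hF.mul_prod hG), ← integral_prod_mul]
  rfl

lemma prod_im_eq (F G : ℝ → ℂ) (hF : Integrable F stdG) (hG : Integrable G stdG) :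
    ∫ p : ℝ × ℝ, (F p.1 * G p.2).im ∂(stdG.prod stdG)
      = ((∫ x, F x ∂stdG) * (∫ y, G y ∂stdG)).im := by
  rw [show (∫ p : ℝ × ℝ, (F p.1 * G p.2).im ∂(stdG.prod stdG))
      = ∫ p : ℝ × ℝ, RCLike.im (F p.1 * G p.2) ∂(stdG.prod stdG) from rfl,
    integral_im (hF.mul_prod hG), ← integral_prod_mul]
  rfl

/-- For X₁ ⊥ Y₁ standard Gaussian and
    f_{s,t}(X₁,Y₁) = (e^{isX₁} − e^{−s²/2})(e^{itY₁} − e^{−t²/2}): all bivariate Hermite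
    coefficients J_{l,0} and J_{0,l} of Re f_{s,t} vanish, and
    E[Im f_{s,t}(X₁,Y₁)·X₁·Y₁] = 0. -/
theorem stmt_12 (s t : ℝ) :
    (∀ l : ℕ,
      (∫ p : ℝ × ℝ,
          ((Complex.exp ((s : ℂ) * (p.1 : ℂ) * Complex.I) - (Real.exp (-(s ^ 2) / 2) : ℂ))
            * (Complex.exp ((t : ℂ) * (p.2 : ℂ) * Complex.I)
                - (Real.exp (-(t ^ 2) / 2) : ℂ))).re
          * (Polynomial.aeval p.1 (Polynomial.hermite l) : ℝ)
        ∂((gaussianReal 0 1).prod (gaussianReal 0 1))) = 0) ∧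
    (∀ l : ℕ,
      (∫ p : ℝ × ℝ,
          ((Complex.exp ((s : ℂ) * (p.1 : ℂ) * Complex.I) - (Real.exp (-(s ^ 2) / 2) : ℂ))
            * (Complex.exp ((t : ℂ) * (p.2 : ℂ) * Complex.I)
                - (Real.exp (-(t ^ 2) / 2) : ℂ))).re
          * (Polynomial.aeval p.2 (Polynomial.hermite l) : ℝ)
        ∂((gaussianReal 0 1).prod (gaussianReal 0 1))) = 0) ∧
    (∫ p : ℝ × ℝ,
        ((Complex.exp ((s : ℂ) * (p.1 : ℂ) * Complex.I) - (Real.exp (-(s ^ 2) / 2) : ℂ))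
          * (Complex.exp ((t : ℂ) * (p.2 : ℂ) * Complex.I)
              - (Real.exp (-(t ^ 2) / 2) : ℂ))).im * p.1 * p.2
      ∂((gaussianReal 0 1).prod (gaussianReal 0 1))) = 0 := by
  have hgs : gaussianReal 0 1 = stdG := rfl
  refine ⟨fun l => ?_, fun l => ?_, ?_⟩
  · rw [hgs]
    have key := prod_re_eq
      (fun x => Afun s x * ((Polynomial.aeval x ((Polynomial.hermite l).map (algebraMap ℤ ℝ)) : ℝ) : ℂ))
      (Afun t) (intA_poly s _) (intA t)
    rw [integralA t, mul_zero, Complex.zero_re] at key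
    refine Eq.trans (integral_congr_ae (Filter.Eventually.of_forall fun p => ?_)) key
    simp only [Polynomial.aeval_map_algebraMap, Afun]
    rw [show (Complex.exp ((s : ℂ) * (p.1 : ℂ) * Complex.I) - (Real.exp (-(s ^ 2) / 2) : ℂ))
          * (((Polynomial.aeval p.1 (Polynomial.hermite l) : ℝ)) : ℂ)
          * (Complex.exp ((t : ℂ) * (p.2 : ℂ) * Complex.I) - (Real.exp (-(t ^ 2) / 2) : ℂ))
        = (Complex.exp ((s : ℂ) * (p.1 : ℂ) * Complex.I) - (Real.exp (-(s ^ 2) / 2) : ℂ))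
          * (Complex.exp ((t : ℂ) * (p.2 : ℂ) * Complex.I) - (Real.exp (-(t ^ 2) / 2) : ℂ))
          * (((Polynomial.aeval p.1 (Polynomial.hermite l) : ℝ)) : ℂ) by ring]
    simp [Complex.mul_re]
  · rw [hgs]
    have key := prod_re_eq (Afun s)
      (fun y => Afun t y * ((Polynomial.aeval y ((Polynomial.hermite l).map (algebraMap ℤ ℝ)) : ℝ) : ℂ))
      (intA s) (intA_poly t _)
    rw [integralA s, zero_mul, Complex.zero_re] at key
    refine Eq.trans (integral_congr_ae (Filter.Eventually.of_forall fun p => ?_)) key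
    simp only [Polynomial.aeval_map_algebraMap, Afun]
    rw [show (Complex.exp ((s : ℂ) * (p.1 : ℂ) * Complex.I) - (Real.exp (-(s ^ 2) / 2) : ℂ))
          * ((Complex.exp ((t : ℂ) * (p.2 : ℂ) * Complex.I) - (Real.exp (-(t ^ 2) / 2) : ℂ))
          * (((Polynomial.aeval p.2 (Polynomial.hermite l) : ℝ)) : ℂ))
        = (Complex.exp ((s : ℂ) * (p.1 : ℂ) * Complex.I) - (Real.exp (-(s ^ 2) / 2) : ℂ))
          * (Complex.exp ((t : ℂ) * (p.2 : ℂ) * Complex.I) - (Real.exp (-(t ^ 2) / 2) : ℂ))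
          * (((Polynomial.aeval p.2 (Polynomial.hermite l) : ℝ)) : ℂ) by ring]
    simp [Complex.mul_re]
  · rw [hgs]
    have hFi : Integrable (fun x => Afun s x * ((x : ℝ) : ℂ)) stdG := by
      have := intA_poly s Polynomial.X; simpa using this
    have hGi : Integrable (fun y => Afun t y * ((y : ℝ) : ℂ)) stdG := by
      have := intA_poly t Polynomial.X; simpa using this
    have key := prod_im_eq _ _ hFi hGi
    rw [Complex.mul_im, reA_zero s, reA_zero t, zero_mul, mul_zero, add_zero] at key
    refine Eq.trans (integral_congr_ae (Filter.Eventually.of_forall fun p => ?_)) key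
    simp only [Afun]
    rw [show (Complex.exp ((s : ℂ) * (p.1 : ℂ) * Complex.I) - (Real.exp (-(s ^ 2) / 2) : ℂ))
          * ((p.1 : ℝ) : ℂ)
          * ((Complex.exp ((t : ℂ) * (p.2 : ℂ) * Complex.I) - (Real.exp (-(t ^ 2) / 2) : ℂ))
          * ((p.2 : ℝ) : ℂ))
        = (Complex.exp ((s : ℂ) * (p.1 : ℂ) * Complex.I) - (Real.exp (-(s ^ 2) / 2) : ℂ))
          * (Complex.exp ((t : ℂ) * (p.2 : ℂ) * Complex.I) - (Real.exp (-(t ^ 2) / 2) : ℂ))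
          * ((p.1 : ℝ) : ℂ) * ((p.2 : ℝ) : ℂ) by ring]
    simp [Complex.mul_im, Complex.mul_re]
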